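/- Suppose there exist two nonzero mutually orthogonal subspaces S₁, S₂ of ℂ^N each invariant under the dynamics, i.e., for every t ≥ 0 and every density matrix ρ with supp(ρ) ⊆ Sᵢ one has supp(exp(t𝓛)(ρ)) ⊆ Sᵢ. Then the system has no globally asymptotically stable equilibrium: there is no steady state ρ_ss such that exp(t𝓛)(ρ₀) → ρ_ss as t → ∞ for every density matrix ρ₀. -/

import Mathlib

open Matrix
open scoped ComplexOrder

attribute [local instance] Matrix.normedAddCommGroup Matrix.normedSpace

/-- The Lindblad generator `𝓛(ρ) = -i[H,ρ] + Σ_d (V_d ρ V_d† - ½(V_d† V_d ρ + ρ V_d† V_d))`,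
as a `ℂ`-linear endomorphism of the matrix space. -/
noncomputable def lindbladOp {n : Type*} [Fintype n] [DecidableEq n] {ι : Type*} [Fintype ι]
    (H : Matrix n n ℂ) (V : ι → Matrix n n ℂ) :
    Matrix n n ℂ →ₗ[ℂ] Matrix n n ℂ where
  toFun ρ := -Complex.I • (H * ρ - ρ * H) +
    ∑ d, (V d * ρ * (V d)ᴴ - (1 / 2 : ℂ) • ((V d)ᴴ * V d * ρ + ρ * ((V d)ᴴ * V d)))
  map_add' x y := by
    simp only [mul_add, add_mul, smul_add, sub_eq_add_neg, neg_add,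
      Finset.sum_add_distrib, Finset.sum_neg_distrib]
    abel
  map_smul' c x := by
    simp only [Matrix.mul_smul, Matrix.smul_mul, smul_sub, smul_add, Finset.smul_sum,
      smul_comm c, RingHom.id_apply]

/-- A density matrix: positive semidefinite with trace one. -/
def IsDensityMatrix {n : Type*} [Fintype n] (ρ : Matrix n n ℂ) : Prop :=
  ρ.PosSemidef ∧ ρ.trace = 1

/-- A steady state of the Lindblad dynamics. -/
noncomputable def IsSteadyState {n : Type*} [Fintype n] [DecidableEq n] {ι : Type*} [Fintype ι]
    (H : Matrix n n ℂ) (V : ι → Matrix n n ℂ) (ρ : Matrix n n ℂ) : Prop :=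
  IsDensityMatrix ρ ∧ lindbladOp H V ρ = 0

/-- The support of a matrix: its range as a linear map `ℂ^N → ℂ^N`. -/
noncomputable def matSupport {n : Type*} [Fintype n] (ρ : Matrix n n ℂ) :
    Submodule ℂ (n → ℂ) :=
  LinearMap.range ρ.mulVecLin

/-- Time evolution `ρ(t) = exp(t𝓛)(ρ₀)`. -/
noncomputable def evolve {n : Type*} [Fintype n] [DecidableEq n] {ι : Type*} [Fintype ι]
    (H : Matrix n n ℂ) (V : ι → Matrix n n ℂ) (t : ℝ) (ρ : Matrix n n ℂ) : Matrix n n ℂ :=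
  letI : NormedRing (Matrix n n ℂ →L[ℂ] Matrix n n ℂ) := ContinuousLinearMap.toNormedRing
  letI : IsTopologicalRing (Matrix n n ℂ →L[ℂ] Matrix n n ℂ) :=
    @NonUnitalSeminormedRing.toIsTopologicalRing _ inferInstance
  NormedSpace.exp ((t : ℂ) • (LinearMap.toContinuousLinearMap (lindbladOp H V))) ρ

/-- Auxiliary: any nonzero subspace carries a density matrix supported inside it. -/
lemma aux_exists_density {n : Type*} [Fintype n] [DecidableEq n]
    (S : Submodule ℂ (n → ℂ)) (h : S ≠ ⊥) :
    ∃ ρ : Matrix n n ℂ, IsDensityMatrix ρ ∧ matSupport ρ ≤ S := by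
  obtain ⟨x, hxS, hx0⟩ := Submodule.ne_bot_iff S |>.1 h
  set c : ℂ := star x ⬝ᵥ x with hc
  have hc0 : c ≠ 0 := fun h => hx0 (dotProduct_star_self_eq_zero.1 h)
  have hcnn : 0 ≤ c := dotProduct_star_self_nonneg x
  have hcinv : 0 ≤ c⁻¹ := by
    rw [Complex.le_def] at hcnn ⊢
    constructor
    · simpa [Complex.inv_re] using div_nonneg hcnn.1 (Complex.normSq_nonneg c)
    · simp [Complex.inv_im, ← hcnn.2]
  have hstar : star c⁻¹ = c⁻¹ := by
    rw [Complex.le_def] at hcinv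
    exact Complex.conj_eq_iff_im.2 hcinv.2.symm
  refine ⟨c⁻¹ • vecMulVec x (star x), ⟨posSemidef_iff_dotProduct_mulVec.2 ⟨?_, ?_⟩, ?_⟩, ?_⟩
  · unfold Matrix.IsHermitian
    rw [conjTranspose_smul, hstar]
    congr 1
    ext i j
    simp [vecMulVec, mul_comm]
  · intro v
    have hmv : (vecMulVec x (star x)) *ᵥ v = (star x ⬝ᵥ v) • x := by
      ext i
      simp [vecMulVec, mulVec, dotProduct, Finset.mul_sum, mul_comm, mul_assoc, mul_left_comm]
    have hsv : star v ⬝ᵥ x = star (star x ⬝ᵥ v) := by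
      simp [dotProduct, Finset.sum_comm, mul_comm]
    rw [smul_mulVec, hmv, dotProduct_smul, dotProduct_smul, smul_eq_mul, smul_eq_mul,
      hsv]
    exact mul_nonneg hcinv (by rw [mul_comm]; exact star_mul_self_nonneg _)
  · rw [trace_smul]
    have : (vecMulVec x (star x)).trace = c := by
      simp [trace, vecMulVec, dotProduct, diag, mul_comm, hc]
    rw [this, smul_eq_mul, inv_mul_cancel₀ hc0]
  · rintro y ⟨v, rfl⟩
    have : (c⁻¹ • vecMulVec x (star x)).mulVecLin v = (c⁻¹ * (star x ⬝ᵥ v)) • x := by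
      simp only [mulVecLin_apply, smul_mulVec]
      have hmv : (vecMulVec x (star x)) *ᵥ v = (star x ⬝ᵥ v) • x := by
        ext i
        simp [vecMulVec, mulVec, dotProduct, Finset.mul_sum, mul_comm, mul_assoc, mul_left_comm]
      rw [hmv, smul_smul]
    rw [this]
    exact S.smul_mem _ hxS

/-- Auxiliary: the matrices whose range lies in `S` form a submodule. -/
noncomputable def rangeIn {n : Type*} [Fintype n] (S : Submodule ℂ (n → ℂ)) :
    Submodule ℂ (Matrix n n ℂ) where
  carrier := {ρ | ∀ v, ρ *ᵥ v ∈ S}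
  add_mem' := fun {a b} ha hb v => by rw [add_mulVec]; exact S.add_mem (ha v) (hb v)
  zero_mem' := fun v => by rw [zero_mulVec]; exact S.zero_mem
  smul_mem' := fun c {a} ha v => by rw [smul_mulVec]; exact S.smul_mem c (ha v)

/-- If there are two nonzero mutually orthogonal subspaces each invariant under the
dynamics, then there is no globally asymptotically stable equilibrium. -/
theorem no_attractive_state_of_orthogonal_invariant_subspaces
    (N : ℕ) (hN : 1 ≤ N)
    (H : Matrix (Fin N) (Fin N) ℂ) (hH : H.IsHermitian)
    {ι : Type*} [Fintype ι] (V : ι → Matrix (Fin N) (Fin N) ℂ)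
    (S₁ S₂ : Submodule ℂ (Fin N → ℂ)) (h1 : S₁ ≠ ⊥) (h2 : S₂ ≠ ⊥)
    (horth : ∀ x ∈ S₁, ∀ y ∈ S₂, star x ⬝ᵥ y = 0)
    (hinv1 : ∀ t : ℝ, 0 ≤ t → ∀ ρ : Matrix (Fin N) (Fin N) ℂ, IsDensityMatrix ρ →
      matSupport ρ ≤ S₁ → matSupport (evolve H V t ρ) ≤ S₁)
    (hinv2 : ∀ t : ℝ, 0 ≤ t → ∀ ρ : Matrix (Fin N) (Fin N) ℂ, IsDensityMatrix ρ →
      matSupport ρ ≤ S₂ → matSupport (evolve H V t ρ) ≤ S₂) :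
    ¬ ∃ ρss : Matrix (Fin N) (Fin N) ℂ, IsSteadyState H V ρss ∧
        ∀ ρ₀ : Matrix (Fin N) (Fin N) ℂ, IsDensityMatrix ρ₀ →
          Filter.Tendsto (fun t : ℝ => evolve H V t ρ₀) Filter.atTop (nhds ρss) := by
  rintro ⟨ρss, ⟨⟨_, htr⟩, _⟩, hconv⟩
  obtain ⟨ρ₁, hd₁, hs₁⟩ := aux_exists_density S₁ h1
  obtain ⟨ρ₂, hd₂, hs₂⟩ := aux_exists_density S₂ h2
  have hmem : ∀ (S : Submodule ℂ (Fin N → ℂ)) (ρ : Matrix (Fin N) (Fin N) ℂ),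
      IsDensityMatrix ρ →
      (∀ t : ℝ, 0 ≤ t → matSupport (evolve H V t ρ) ≤ S) → ρss ∈ rangeIn S := by
    intro S ρ hd hsup
    have hcl : IsClosed ((rangeIn S : Set (Matrix (Fin N) (Fin N) ℂ))) :=
      (rangeIn S).closed_of_finiteDimensional
    refine hcl.mem_of_tendsto (hconv ρ hd) ?_
    filter_upwards [Filter.eventually_ge_atTop (0 : ℝ)] with t ht
    intro v
    exact hsup t ht (LinearMap.mem_range_self _ v)
  have hm1 : ρss ∈ rangeIn S₁ := hmem S₁ ρ₁ hd₁ (fun t ht => hinv1 t ht ρ₁ hd₁ hs₁)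
  have hm2 : ρss ∈ rangeIn S₂ := hmem S₂ ρ₂ hd₂ (fun t ht => hinv2 t ht ρ₂ hd₂ hs₂)
  have hz : ∀ v, ρss *ᵥ v = 0 := fun v =>
    dotProduct_star_self_eq_zero.1 (horth _ (hm1 v) _ (hm2 v))
  have hzero : ρss = 0 := by
    ext i j
    have := congrFun (hz (Pi.single j 1)) i
    rw [mulVec_single] at this
    simpa using this
  rw [hzero] at htr
  simp at htr
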